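/- Consider the θ-scheme setting below. Assume 0 ≤ θ < 1/4, ⟪Av,v⟫ ≥ 0 for all v ∈ V, ⟪Mv,v⟫ ≥ m_min·‖v‖² for all v ∈ V with m_min > 0, and that for some δ ∈ (0,1) the CFL-type spectral condition τ²·(1/4 − θ)·⟪Av,v⟫ ≤ (1−δ)²·⟪Mv,v⟫ holds for all v ∈ V. Let (u^n)_{n≥0} be a θ-scheme solution with forcing (F^n)_{n≥1}, and set c_δ := m_min·(1 − (1−δ)²) > 0. Then every discrete energy E^{n+1/2} is nonnegative and for every n ≥ 0: √(E^{n+1/2}) ≤ √(E^{1/2}) + (τ/√(2·c_δ))·Σ_{k=1}^{n} ‖F^k‖. -/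

import Mathlib

open RealInnerProductSpace

variable {V : Type*} [NormedAddCommGroup V] [InnerProductSpace ℝ V]

/-- Discrete time derivative `D_τ u^{n+1/2} = (u^{n+1} − u^n)/τ`. -/
noncomputable def Dtau (τ : ℝ) (u : ℕ → V) (n : ℕ) : V := τ⁻¹ • (u (n + 1) - u n)

/-- Midpoint average `u^{n+1/2} = (u^{n+1} + u^n)/2`. -/
noncomputable def uAvg (u : ℕ → V) (n : ℕ) : V := ((1 : ℝ) / 2) • (u (n + 1) + u n)

/-- Discrete energy `E^{n+1/2}` of the θ-scheme. -/
noncomputable def discreteEnergy (M A : V →ₗ[ℝ] V) (τ θ : ℝ) (u : ℕ → V) (n : ℕ) : ℝ :=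
  (1 / 2) * (⟪M (Dtau τ u n), Dtau τ u n⟫ + ⟪A (uAvg u n), uAvg u n⟫
    + τ ^ 2 * (θ - 1 / 4) * ⟪A (Dtau τ u n), Dtau τ u n⟫)

/-- `(u^n)` is a θ-scheme solution with forcing `(F^n)_{n≥1}`: for every `n ≥ 1`,
`M((u^{n+1} − 2u^n + u^{n−1})/τ²) + A(θu^{n+1} + (1−2θ)u^n + θu^{n−1}) = F^n`
(written here with shifted index `n+1` to avoid natural subtraction). -/
def IsThetaScheme (M A : V →ₗ[ℝ] V) (τ θ : ℝ) (u : ℕ → V) (F : ℕ → V) : Prop :=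
  ∀ n : ℕ,
    M ((τ ^ 2)⁻¹ • (u (n + 2) - (2 : ℝ) • u (n + 1) + u n))
      + A (θ • u (n + 2) + (1 - 2 * θ) • u (n + 1) + θ • u n) = F (n + 1)

lemma energy_diff_eq (M A : V →ₗ[ℝ] V)
    (hM : ∀ x y : V, ⟪M x, y⟫ = ⟪x, M y⟫) (hA : ∀ x y : V, ⟪A x, y⟫ = ⟪x, A y⟫)
    (τ θ : ℝ) (hτ : τ ≠ 0) (u F : ℕ → V) (hs : IsThetaScheme M A τ θ u F) (n : ℕ) :
    discreteEnergy M A τ θ u (n+1) - discreteEnergy M A τ θ u n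
      = (1/2) * ⟪F (n+1), u (n+2) - u n⟫ := by
  have hMs : ∀ x y : V, ⟪M x, y⟫ = ⟪M y, x⟫ := fun x y => (hM x y).trans (real_inner_comm _ _)
  have hAs : ∀ x y : V, ⟪A x, y⟫ = ⟪A y, x⟫ := fun x y => (hA x y).trans (real_inner_comm _ _)
  have h := congrArg (fun w : V => ⟪w, u (n+2) - u n⟫) (hs n)
  simp only [inner_add_left, map_smul, map_add, map_sub, real_inner_smul_left,
    inner_sub_left, inner_sub_right, inner_add_right, real_inner_smul_right] at h
  simp only [discreteEnergy, Dtau, uAvg, map_smul, map_add, map_sub, real_inner_smul_left,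
    real_inner_smul_right, inner_add_left, inner_add_right, inner_sub_left, inner_sub_right,
    show n+1+1 = n+2 from rfl]
  simp only [hMs (u (n+1)) (u (n+2)), hMs (u n) (u (n+2)), hMs (u n) (u (n+1)),
    hAs (u (n+1)) (u (n+2)), hAs (u n) (u (n+2)), hAs (u n) (u (n+1))] at h ⊢
  field_simp at h ⊢
  linear_combination 16 * h

/-- Stability estimate for the θ-method with `0 ≤ θ < 1/4` under the CFL-type
spectral condition: with `c_δ = m_min(1 − (1−δ)²)`, every discrete energy is
nonnegative and `√E^{n+1/2} ≤ √E^{1/2} + (τ/√(2 c_δ))·Σ_{k=1}^n ‖F^k‖`. -/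
theorem theta_scheme_stability_estimate_cfl
    [FiniteDimensional ℝ V] (M A : V →ₗ[ℝ] V)
    (hM : ∀ x y : V, ⟪M x, y⟫ = ⟪x, M y⟫) (hA : ∀ x y : V, ⟪A x, y⟫ = ⟪x, A y⟫)
    (hApsd : ∀ v : V, 0 ≤ ⟪A v, v⟫)
    (mmin : ℝ) (hmmin : 0 < mmin) (hMlow : ∀ v : V, mmin * ‖v‖ ^ 2 ≤ ⟪M v, v⟫)
    (τ θ : ℝ) (hτ : 0 < τ) (hθ0 : 0 ≤ θ) (hθ : θ < 1 / 4)
    (δ : ℝ) (hδ0 : 0 < δ) (hδ1 : δ < 1)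
    (hCFL : ∀ v : V, τ ^ 2 * (1 / 4 - θ) * ⟪A v, v⟫ ≤ (1 - δ) ^ 2 * ⟪M v, v⟫)
    (u F : ℕ → V) (hscheme : IsThetaScheme M A τ θ u F)
    (cδ : ℝ) (hcδ : cδ = mmin * (1 - (1 - δ) ^ 2)) :
    0 < cδ ∧
    (∀ n : ℕ, 0 ≤ discreteEnergy M A τ θ u n) ∧
    ∀ n : ℕ, Real.sqrt (discreteEnergy M A τ θ u n) ≤
      Real.sqrt (discreteEnergy M A τ θ u 0)
        + (τ / Real.sqrt (2 * cδ)) * ∑ k ∈ Finset.Icc 1 n, ‖F k‖ := by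
  set E : ℕ → ℝ := discreteEnergy M A τ θ u with hE
  have hcδpos : 0 < cδ := by
    rw [hcδ]
    have h1 : (1 - δ) ^ 2 < 1 := by nlinarith [mul_pos hδ0 (show (0:ℝ) < 2 - δ by linarith)]
    exact mul_pos hmmin (by linarith)
  -- coercivity: cδ/2 * ‖D‖² ≤ E n
  have hcoer : ∀ n : ℕ, cδ / 2 * ‖Dtau τ u n‖ ^ 2 ≤ E n := by
    intro n
    have h1 := hCFL (Dtau τ u n)
    have h2 := hMlow (Dtau τ u n)
    have h3 := hApsd (uAvg u n)
    have h4 : mmin * ‖Dtau τ u n‖ ^ 2 ≤ ⟪M (Dtau τ u n), Dtau τ u n⟫ := hMlow _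
    have h5 : (0:ℝ) ≤ ‖Dtau τ u n‖ ^ 2 := by positivity
    rw [hE, discreteEnergy, hcδ]
    nlinarith [sq_nonneg (1 - δ)]
  have hEnonneg : ∀ n : ℕ, 0 ≤ E n := fun n =>
    le_trans (by positivity) (hcoer n)
  -- norm of D bounded by sqrt(2 E n / cδ)
  have hDbound : ∀ n : ℕ, ‖Dtau τ u n‖ ≤ Real.sqrt (2 / cδ) * Real.sqrt (E n) := by
    intro n
    have h1 := hcoer n
    have : ‖Dtau τ u n‖ ^ 2 ≤ 2 / cδ * E n := by
      rw [div_mul_eq_mul_div, le_div_iff₀ hcδpos]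
      nlinarith
    calc ‖Dtau τ u n‖ = Real.sqrt (‖Dtau τ u n‖ ^ 2) := by
            rw [Real.sqrt_sq (norm_nonneg _)]
      _ ≤ Real.sqrt (2 / cδ * E n) := Real.sqrt_le_sqrt this
      _ = Real.sqrt (2 / cδ) * Real.sqrt (E n) := Real.sqrt_mul (by positivity) _
  -- one-step estimate
  have hstep : ∀ n : ℕ, Real.sqrt (E (n+1)) ≤ Real.sqrt (E n)
      + (τ / Real.sqrt (2 * cδ)) * ‖F (n+1)‖ := by
    intro n
    have hdiff := energy_diff_eq M A hM hA τ θ hτ.ne' u F hscheme n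
    have hsplit : u (n+2) - u n = τ • (Dtau τ u (n+1) + Dtau τ u n) := by
      simp only [Dtau, smul_add, smul_smul, mul_inv_cancel₀ hτ.ne', one_smul,
        show n+1+1 = n+2 from rfl]
      abel
    set s := Real.sqrt (E (n+1)) with hs
    set t := Real.sqrt (E n) with ht
    have hs2 : s ^ 2 = E (n+1) := Real.sq_sqrt (hEnonneg _)
    have ht2 : t ^ 2 = E n := Real.sq_sqrt (hEnonneg _)
    have hsn : 0 ≤ s := Real.sqrt_nonneg _
    have htn : 0 ≤ t := Real.sqrt_nonneg _
    have hc : E (n+1) - E n ≤ (τ / Real.sqrt (2 * cδ)) * ‖F (n+1)‖ * (s + t) := by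
      rw [hE, hdiff, hsplit]
      have h1 : ⟪F (n+1), τ • (Dtau τ u (n+1) + Dtau τ u n)⟫
          ≤ ‖F (n+1)‖ * (τ * (‖Dtau τ u (n+1)‖ + ‖Dtau τ u n‖)) := by
        calc ⟪F (n+1), τ • (Dtau τ u (n+1) + Dtau τ u n)⟫
            ≤ ‖F (n+1)‖ * ‖τ • (Dtau τ u (n+1) + Dtau τ u n)‖ := real_inner_le_norm _ _
          _ ≤ ‖F (n+1)‖ * (τ * (‖Dtau τ u (n+1)‖ + ‖Dtau τ u n‖)) := by
              gcongr
              rw [norm_smul, Real.norm_of_nonneg hτ.le]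
              gcongr
              exact norm_add_le _ _
      have h2 : ‖Dtau τ u (n+1)‖ + ‖Dtau τ u n‖ ≤ Real.sqrt (2 / cδ) * (s + t) := by
        have := hDbound (n+1); have := hDbound n
        rw [mul_add]; exact add_le_add (hDbound (n+1)) (hDbound n)
      have hprod : Real.sqrt (2 / cδ) * Real.sqrt (2 * cδ) = 2 := by
        rw [← Real.sqrt_mul (by positivity), show 2 / cδ * (2 * cδ) = 2 ^ 2 by
          field_simp, Real.sqrt_sq (by norm_num)]
      have hkey : (1:ℝ)/2 * Real.sqrt (2 / cδ) = 1 / Real.sqrt (2 * cδ) := by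
        have hpos : 0 < Real.sqrt (2 * cδ) := Real.sqrt_pos.mpr (by positivity)
        rw [eq_div_iff hpos.ne']
        linear_combination (1/2 : ℝ) * hprod
      calc (1:ℝ)/2 * ⟪F (n+1), τ • (Dtau τ u (n+1) + Dtau τ u n)⟫
          ≤ 1/2 * (‖F (n+1)‖ * (τ * (‖Dtau τ u (n+1)‖ + ‖Dtau τ u n‖))) := by linarith
        _ ≤ 1/2 * (‖F (n+1)‖ * (τ * (Real.sqrt (2 / cδ) * (s + t)))) := by
            have hst : 0 ≤ s + t := by positivity
            gcongr
        _ = (τ / Real.sqrt (2 * cδ)) * ‖F (n+1)‖ * (s + t) := by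
            rw [div_eq_mul_one_div τ]
            linear_combination (‖F (n+1)‖ * τ * (s + t)) * hkey
    -- from s² - t² ≤ c(s+t) with c ≥ 0 conclude s ≤ t + c
    have hcnn : 0 ≤ (τ / Real.sqrt (2 * cδ)) * ‖F (n+1)‖ := by positivity
    nlinarith [hc, hs2, ht2, mul_nonneg hsn htn, sq_nonneg (s - t), sq_nonneg (s + t)]
  refine ⟨hcδpos, hEnonneg, ?_⟩
  intro n
  induction n with
  | zero => simp
  | succ n ih =>
      rw [Finset.sum_Icc_succ_top (Nat.one_le_iff_ne_zero.mpr (Nat.succ_ne_zero n))]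
      calc Real.sqrt (E (n+1)) ≤ Real.sqrt (E n) + (τ / Real.sqrt (2 * cδ)) * ‖F (n+1)‖ :=
            hstep n
        _ ≤ Real.sqrt (E 0) + (τ / Real.sqrt (2 * cδ)) * ∑ k ∈ Finset.Icc 1 n, ‖F k‖
              + (τ / Real.sqrt (2 * cδ)) * ‖F (n+1)‖ := by gcongr
        _ = _ := by ring
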